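/- Suppose ω : [0, a*σ] → ℝ is nonnegative, nondecreasing, concave, differentiable on (0, a*σ] with everywhere positive right derivative at 0, and σ > 0. Then the maximization problem max_{ε ∈ [0, a*σ]} ω(ε)·Φ(−ε/σ) has a unique solution, and this solution is nonzero if and only if σ > 2φ(0)·ω(0)/ω'(0), where ω'(0) is the right derivative of ω at 0. -/

import Mathlib

open Set Filter Topology MeasureTheory Real

noncomputable def stdGaussianPDF (x : ℝ) : ℝ :=
  (Real.sqrt (2 * Real.pi))⁻¹ * Real.exp (-(x ^ 2) / 2)

noncomputable def stdGaussianCDF (x : ℝ) : ℝ :=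
  ∫ t in Set.Iic x, stdGaussianPDF t

lemma pdf_pos (x : ℝ) : 0 < stdGaussianPDF x :=
  mul_pos (inv_pos.2 (Real.sqrt_pos.2 (by positivity))) (Real.exp_pos _)

lemma pdf_eq (x : ℝ) : stdGaussianPDF x = (Real.sqrt (2 * Real.pi))⁻¹ * Real.exp (-(1/2 : ℝ) * x ^ 2) := by
  rw [stdGaussianPDF]; ring_nf

lemma pdf_cont : Continuous stdGaussianPDF := by
  unfold stdGaussianPDF
  exact continuous_const.mul ((continuous_pow 2).neg.div_const 2).rexp

lemma pdf_even (x : ℝ) : stdGaussianPDF (-x) = stdGaussianPDF x := by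
  simp [stdGaussianPDF, neg_sq]

lemma pdf_integrable : Integrable stdGaussianPDF := by
  have h := (integrable_exp_neg_mul_sq (by norm_num : (0:ℝ) < 1/2)).const_mul
    (Real.sqrt (2 * Real.pi))⁻¹
  refine h.congr (Filter.Eventually.of_forall fun x => ?_)
  rw [pdf_eq]

lemma pdf_integral : ∫ x, stdGaussianPDF x = 1 := by
  have h : ∫ x, stdGaussianPDF x
      = (Real.sqrt (2 * Real.pi))⁻¹ * ∫ x, Real.exp (-(1/2 : ℝ) * x ^ 2) := by
    rw [← MeasureTheory.integral_const_mul]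
    exact integral_congr_ae (Filter.Eventually.of_forall fun x => pdf_eq x)
  rw [h, integral_gaussian]
  have h2 : Real.pi / (1/2 : ℝ) = 2 * Real.pi := by ring
  rw [h2, inv_mul_cancel₀ (ne_of_gt (Real.sqrt_pos.2 (by positivity)))]

lemma hasDerivAt_cdf (x : ℝ) : HasDerivAt stdGaussianCDF (stdGaussianPDF x) x := by
  have key : ∀ y : ℝ, stdGaussianCDF y
      = stdGaussianCDF 0 + ∫ t in (0:ℝ)..y, stdGaussianPDF t := by
    intro y
    have := intervalIntegral.integral_Iic_sub_Iic (f := stdGaussianPDF) (μ := volume)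
      (pdf_integrable.integrableOn) (pdf_integrable.integrableOn) (a := 0) (b := y)
    simp only [stdGaussianCDF]
    linarith
  have h : HasDerivAt (fun y => stdGaussianCDF 0 + ∫ t in (0:ℝ)..y, stdGaussianPDF t)
      (stdGaussianPDF x) x := by
    refine HasDerivAt.const_add _ ?_
    exact intervalIntegral.integral_hasDerivAt_right
      (pdf_cont.intervalIntegrable _ _)
      (pdf_cont.stronglyMeasurableAtFilter _ _)
      pdf_cont.continuousAt
  exact h.congr_of_eventuallyEq (Filter.Eventually.of_forall key)

lemma cdf_pos (x : ℝ) : 0 < stdGaussianCDF x := by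
  rw [stdGaussianCDF]
  rw [MeasureTheory.setIntegral_pos_iff_support_of_nonneg_ae
    (Filter.Eventually.of_forall fun t => (pdf_pos t).le) pdf_integrable.integrableOn]
  have : Function.support stdGaussianPDF = Set.univ := by
    ext t; simp [Function.mem_support, (pdf_pos t).ne']
  rw [this, Set.univ_inter, Real.volume_Iic]
  simp

lemma cdf_tail (x : ℝ) : stdGaussianCDF (-x) = ∫ t in Set.Ioi x, stdGaussianPDF t := by
  rw [stdGaussianCDF]
  have h : ∀ t ∈ Set.Iic (-x), stdGaussianPDF t = stdGaussianPDF (-t) := by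
    intro t _; rw [pdf_even]
  rw [MeasureTheory.setIntegral_congr_fun measurableSet_Iic h,
    integral_comp_neg_Iic, neg_neg]

lemma cdf_zero : stdGaussianCDF 0 = 1/2 := by
  have h := intervalIntegral.integral_Iic_add_Ioi (μ := volume) (b := (0:ℝ))
    pdf_integrable.integrableOn pdf_integrable.integrableOn
  have h2 : stdGaussianCDF (-0) = ∫ t in Set.Ioi (0:ℝ), stdGaussianPDF t := cdf_tail 0
  rw [neg_zero] at h2
  rw [pdf_integral] at h
  have : stdGaussianCDF 0 + stdGaussianCDF 0 = 1 := by
    rw [stdGaussianCDF] at *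
    linarith [h, h2]
  linarith

lemma hasDerivAt_pdf (x : ℝ) : HasDerivAt stdGaussianPDF (-x * stdGaussianPDF x) x := by
  have h1 : HasDerivAt (fun t : ℝ => -(t ^ 2) / 2) (-x) x := by
    have := ((hasDerivAt_pow 2 x).neg.div_const 2)
    refine this.congr_deriv ?_
    norm_num
    ring
  have h2 := (h1.exp).const_mul (Real.sqrt (2 * Real.pi))⁻¹
  have h3 : HasDerivAt stdGaussianPDF
      ((Real.sqrt (2 * Real.pi))⁻¹ * (Real.exp (-(x ^ 2) / 2) * -x)) x := h2
  convert h3 using 1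
  rw [stdGaussianPDF]; ring

lemma tendsto_pdf_atTop : Tendsto (fun x => stdGaussianPDF x) atTop (nhds 0) := by
  have h1 : Tendsto (fun t : ℝ => t ^ 2) atTop atTop := tendsto_pow_atTop two_ne_zero
  have h2 : Tendsto (fun t : ℝ => -(t ^ 2)) atTop atBot := tendsto_neg_atTop_atBot.comp h1
  have h3 : Tendsto (fun t : ℝ => -(t ^ 2) / 2) atTop atBot := h2.atBot_div_const two_pos
  have h4 : Tendsto (fun t : ℝ => Real.exp (-(t ^ 2) / 2)) atTop (nhds 0) :=
    Real.tendsto_exp_atBot.comp h3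
  have h5 := h4.const_mul (Real.sqrt (2 * Real.pi))⁻¹
  simpa [stdGaussianPDF] using h5

lemma integrableOn_mul_pdf (s : Set ℝ) : IntegrableOn (fun t => t * stdGaussianPDF t) s := by
  have h := ((integrable_mul_exp_neg_mul_sq (by norm_num : (0:ℝ) < 1/2)).const_mul
    (Real.sqrt (2 * Real.pi))⁻¹)
  refine (h.congr (Filter.Eventually.of_forall fun t => ?_)).integrableOn
  rw [pdf_eq]; ring

lemma integral_Ioi_mul_pdf (x : ℝ) :
    ∫ t in Set.Ioi x, t * stdGaussianPDF t = stdGaussianPDF x := by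
  have h := MeasureTheory.integral_Ioi_of_hasDerivAt_of_tendsto
    (f := fun t => -stdGaussianPDF t) (f' := fun t => t * stdGaussianPDF t) (a := x)
    (pdf_cont.neg.continuousWithinAt)
    (fun t _ => by
      have := (hasDerivAt_pdf t).neg; simp only [neg_mul, neg_neg] at this; exact this)
    (integrableOn_mul_pdf _)
    (tendsto_pdf_atTop.neg)
  simpa using h

lemma mills_weak (x : ℝ) (hx : 0 < x) :
    x * stdGaussianCDF (-x) ≤ stdGaussianPDF x := by
  rw [cdf_tail, ← MeasureTheory.integral_const_mul, ← integral_Ioi_mul_pdf x]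
  refine MeasureTheory.setIntegral_mono_on
    ((pdf_integrable.const_mul x).integrableOn)
    (integrableOn_mul_pdf _) measurableSet_Ioi ?_
  intro t ht
  exact mul_le_mul_of_nonneg_right (le_of_lt ht) (pdf_pos t).le

lemma hasDerivAt_cdf_neg (x : ℝ) :
    HasDerivAt (fun y => stdGaussianCDF (-y)) (-stdGaussianPDF x) x := by
  have h := (hasDerivAt_cdf (-x)).comp x (hasDerivAt_neg x)
  simpa [pdf_even, Function.comp_def] using h

lemma mills (x : ℝ) : x * stdGaussianCDF (-x) < stdGaussianPDF x := by
  set u : ℝ → ℝ := fun y => stdGaussianPDF y - y * stdGaussianCDF (-y) with hu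
  have hderivu : ∀ y : ℝ, HasDerivAt u (-stdGaussianCDF (-y)) y := by
    intro y
    have h1 := (hasDerivAt_pdf y).sub
      ((hasDerivAt_id y).mul (hasDerivAt_cdf_neg y))
    refine h1.congr_deriv ?_
    simp only [id]
    ring
  have hanti : StrictAnti u := by
    refine strictAnti_of_deriv_neg fun y => ?_
    rw [(hderivu y).deriv]
    simpa using cdf_pos (-y)
  have hy : x < max x 0 + 1 := lt_of_le_of_lt (le_max_left x 0) (by linarith)
  have h0 : 0 < max x 0 + 1 := lt_of_le_of_lt (le_max_right x 0) (by linarith)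
  have h1 := hanti hy
  have h2 := mills_weak _ h0
  simp only [hu] at h1
  nlinarith

lemma hazard_strictMono :
    StrictMono (fun x => stdGaussianPDF x / stdGaussianCDF (-x)) := by
  refine strictMono_of_deriv_pos fun x => ?_
  have hQ : stdGaussianCDF (-x) ≠ 0 := (cdf_pos (-x)).ne'
  have h := (hasDerivAt_pdf x).div (hasDerivAt_cdf_neg x) hQ
  rw [show (fun x => stdGaussianPDF x / stdGaussianCDF (-x))
      = (stdGaussianPDF / fun y => stdGaussianCDF (-y)) from rfl, h.deriv]
  have hnum : -x * stdGaussianPDF x * stdGaussianCDF (-x)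
      - stdGaussianPDF x * -stdGaussianPDF x
      = stdGaussianPDF x * (stdGaussianPDF x - x * stdGaussianCDF (-x)) := by ring
  rw [hnum]
  have hm := mills x
  exact div_pos (mul_pos (pdf_pos x) (by linarith)) (pow_pos (cdf_pos _) 2)

lemma concave_slope_le_deriv {s : Set ℝ} {ω : ℝ → ℝ} (hconc : ConcaveOn ℝ s ω)
    {a b d : ℝ} (ha : a ∈ s) (hb : b ∈ s) (hab : a < b)
    (hd : HasDerivWithinAt ω d (Set.Ici a) a) :
    (ω b - ω a) / (b - a) ≤ d := by
  have hmem : ∀ t ∈ Set.Ioo a b, t ∈ s := fun t ht =>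
    hconc.1.ordConnected.out ha hb ⟨ht.1.le, ht.2.le⟩
  have ht : Tendsto (slope ω a) (𝓝[>] a) (𝓝 d) := by
    have h := hasDerivWithinAt_iff_tendsto_slope.1 hd
    rwa [Set.Ici_sdiff_left] at h
  refine ge_of_tendsto ht ?_
  filter_upwards [Ioo_mem_nhdsGT_of_mem (Set.mem_Ico.2 ⟨le_refl a, hab⟩)] with t ht'
  have h2 := hconc.neg.secant_mono ha (hmem t ht') hb (ne_of_gt ht'.1) (ne_of_gt hab)
    ht'.2.le
  simp only [Pi.neg_apply] at h2
  have e1 : (-ω t - -ω a) / (t - a) = -((ω t - ω a) / (t - a)) := by ring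
  have e2 : (-ω b - -ω a) / (b - a) = -((ω b - ω a) / (b - a)) := by ring
  rw [e1, e2] at h2
  rw [slope_def_field]
  linarith

lemma concave_deriv_le_slope {s : Set ℝ} {ω : ℝ → ℝ} (hconc : ConcaveOn ℝ s ω)
    {a b d : ℝ} (ha : a ∈ s) (hb : b ∈ s) (hab : a < b)
    (hd : HasDerivAt ω d b) :
    d ≤ (ω b - ω a) / (b - a) := by
  have hmem : ∀ t ∈ Set.Ioo a b, t ∈ s := fun t ht =>
    hconc.1.ordConnected.out ha hb ⟨ht.1.le, ht.2.le⟩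
  have ht : Tendsto (slope ω b) (𝓝[<] b) (𝓝 d) :=
    (hasDerivAt_iff_tendsto_slope.1 hd).mono_left
      (nhdsWithin_mono b (fun t ht => ne_of_lt ht))
  refine le_of_tendsto ht ?_
  filter_upwards [Ioo_mem_nhdsLT_of_mem (Set.mem_Ioc.2 ⟨hab, le_refl b⟩)] with t ht'
  have h2 := hconc.neg.secant_mono hb ha (hmem t ht') (ne_of_lt hab) (ne_of_lt ht'.2)
    ht'.1.le
  simp only [Pi.neg_apply] at h2
  have hba : a - b ≠ 0 := sub_ne_zero.2 hab.ne
  have hba' : b - a ≠ 0 := sub_ne_zero.2 hab.ne'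
  have e1 : (-ω a - -ω b) / (a - b) = -((ω b - ω a) / (b - a)) := by
    rw [show (-ω a - -ω b) = ω b - ω a from by ring,
      show a - b = -(b - a) from by ring, div_neg]
  have e2 : (-ω t - -ω b) / (t - b) = -((ω t - ω b) / (t - b)) := by ring
  rw [e1, e2] at h2
  rw [slope_def_field]
  linarith

lemma exists_gt_of_right_deriv_pos {h : ℝ → ℝ} {d M : ℝ} (hM : 0 < M)
    (hd : HasDerivWithinAt h d (Set.Ici 0) 0) (hdpos : 0 < d) :
    ∃ t ∈ Set.Ioc 0 M, h 0 < h t := by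
  have ht : Tendsto (slope h 0) (𝓝[>] 0) (𝓝 d) := by
    have := hasDerivWithinAt_iff_tendsto_slope.1 hd
    rwa [Set.Ici_sdiff_left] at this
  have hev := ht.eventually (eventually_gt_nhds hdpos)
  have hmem : Set.Ioc 0 M ∈ 𝓝[>] (0:ℝ) :=
    Ioc_mem_nhdsGT_of_mem (Set.mem_Ico.2 ⟨le_refl 0, hM⟩)
  obtain ⟨t, h1, h2⟩ := (hev.and (eventually_of_mem hmem fun x hx => hx)).exists
  refine ⟨t, h2, ?_⟩
  have h3 : 0 < (h t - h 0) / (t - 0) := by rwa [slope_def_field] at h1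
  rcases div_pos_iff.1 h3 with ⟨hnum, _⟩ | ⟨_, hden⟩
  · linarith
  · linarith [h2.1]

/-- Let `ω : [0, a*σ] → ℝ` be nonnegative, nondecreasing, concave, differentiable on
`(0, a*σ]` with positive right derivative `ω'(0)` at `0`, and `σ > 0`, where `a*` is
the unique maximizer of `a·Φ(−a)` over `[0, ∞)`. Then `max_{ε ∈ [0, a*σ]} ω(ε)·Φ(−ε/σ)`
has a unique solution, and this solution is nonzero iff `σ > 2φ(0)·ω(0)/ω'(0)`. -/
theorem unique_solution_modulus_max (σ astar : ℝ) (hσ : 0 < σ)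
    (hastar0 : 0 ≤ astar)
    (hmax : ∀ a, 0 ≤ a → a * stdGaussianCDF (-a) ≤ astar * stdGaussianCDF (-astar))
    (huniq : ∀ a, 0 ≤ a →
      (∀ b, 0 ≤ b → b * stdGaussianCDF (-b) ≤ a * stdGaussianCDF (-a)) → a = astar)
    (ω ω' : ℝ → ℝ)
    (hnonneg : ∀ ε ∈ Set.Icc 0 (astar * σ), 0 ≤ ω ε)
    (hmono : MonotoneOn ω (Set.Icc 0 (astar * σ)))
    (hconc : ConcaveOn ℝ (Set.Icc 0 (astar * σ)) ω)
    (hderiv : ∀ ε ∈ Set.Ioc 0 (astar * σ), HasDerivAt ω (ω' ε) ε)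
    (hderiv0 : HasDerivWithinAt ω (ω' 0) (Set.Ici 0) 0)
    (hpos0 : 0 < ω' 0) :
    ∃ εs ∈ Set.Icc 0 (astar * σ),
      (∀ ε ∈ Set.Icc 0 (astar * σ),
        ω ε * stdGaussianCDF (-(ε / σ)) ≤ ω εs * stdGaussianCDF (-(εs / σ))) ∧
      (∀ ε ∈ Set.Icc 0 (astar * σ),
        (∀ ε' ∈ Set.Icc 0 (astar * σ),
          ω ε' * stdGaussianCDF (-(ε' / σ)) ≤ ω ε * stdGaussianCDF (-(ε / σ))) → ε = εs) ∧
      (εs ≠ 0 ↔ 2 * stdGaussianPDF 0 * (ω 0 / ω' 0) < σ) := by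
  set M := astar * σ with hMdef
  -- M is positive
  have hastar : 0 < astar := by
    rcases eq_or_lt_of_le hastar0 with h | h
    · exfalso
      have h2 := hmax 1 zero_le_one
      rw [← h] at h2
      simp only [one_mul, neg_zero, zero_mul] at h2
      linarith [cdf_pos (-1 : ℝ)]
    · exact h
  have hM : 0 < M := mul_pos hastar hσ
  set f : ℝ → ℝ := fun ε => ω ε * stdGaussianCDF (-(ε / σ)) with hfdef
  set g : ℝ → ℝ := fun x => Real.log (ω x) + Real.log (stdGaussianCDF (-(x / σ)))
    with hgdef
  -- derivative of the CDF composition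
  have hQd : ∀ ε : ℝ, HasDerivAt (fun t : ℝ => stdGaussianCDF (-(t / σ)))
      (-(stdGaussianPDF (ε / σ) / σ)) ε := by
    intro ε
    have h1 : HasDerivAt (fun t : ℝ => -(t / σ)) (-σ⁻¹) ε := by
      exact ((hasDerivAt_id' ε).div_const σ).neg.congr_deriv (by ring)
    have h2 := (hasDerivAt_cdf (-(ε / σ))).comp ε h1
    have h3 : HasDerivAt (fun t : ℝ => stdGaussianCDF (-(t / σ)))
        (stdGaussianPDF (-(ε / σ)) * -σ⁻¹) ε := h2
    convert h3 using 1
    rw [pdf_even]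
    ring
  have hQcont : Continuous (fun t : ℝ => stdGaussianCDF (-(t / σ))) :=
    continuous_iff_continuousAt.2 fun ε => (hQd ε).continuousAt
  -- continuity of ω on the interval
  have hωcont : ContinuousOn ω (Set.Icc 0 M) := by
    intro x hx
    rcases eq_or_lt_of_le hx.1 with h | h
    · rw [← h]
      exact hderiv0.continuousWithinAt.mono (fun y hy => hy.1)
    · exact ((hderiv x ⟨h, hx.2⟩).continuousAt).continuousWithinAt
  have hω0 : 0 ≤ ω 0 := hnonneg 0 ⟨le_refl 0, hM.le⟩
  -- ω is positive on (0, M]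
  have hωpos : ∀ x ∈ Set.Ioc 0 M, 0 < ω x := by
    obtain ⟨t0, ht0, hωt0⟩ := exists_gt_of_right_deriv_pos hM hderiv0 hpos0
    intro x hx
    rcases le_or_gt t0 x with h | h
    · have := hmono ⟨ht0.1.le, ht0.2⟩ ⟨hx.1.le, hx.2⟩ h
      linarith
    · -- concavity: x between 0 and t0
      have hbne : t0 ≠ 0 := ht0.1.ne'
      set b : ℝ := x / t0 with hbdef
      have hb0 : 0 < b := div_pos hx.1 ht0.1
      have hb1 : b < 1 := (div_lt_one ht0.1).2 h
      have hcomb := hconc.2 (Set.mem_Icc.2 ⟨le_refl 0, hM.le⟩)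
        (Set.mem_Icc.2 ⟨ht0.1.le, ht0.2⟩) (by linarith : (0:ℝ) ≤ 1 - b) hb0.le
        (by ring : (1 - b) + b = 1)
      simp only [smul_eq_mul] at hcomb
      have hx' : (1 - b) * 0 + b * t0 = x := by rw [hbdef]; field_simp; ring
      rw [hx'] at hcomb
      nlinarith [mul_pos hb0 (lt_of_le_of_lt hω0 hωt0)]
  -- existence of a maximizer
  have hfcont : ContinuousOn f (Set.Icc 0 M) := hωcont.mul hQcont.continuousOn
  obtain ⟨εs, hεsmem, hεsmax⟩ := isCompact_Icc.exists_isMaxOn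
    (Set.nonempty_Icc.2 hM.le) hfcont
  have hεsmax' : ∀ x ∈ Set.Icc 0 M, f x ≤ f εs := fun x hx => hεsmax hx
  have hfM : 0 < f M := mul_pos (hωpos M ⟨hM, le_refl M⟩) (cdf_pos _)
  have hV : 0 < f εs := lt_of_lt_of_le hfM (hεsmax' M ⟨hM.le, le_refl M⟩)
  -- derivative of g
  have hgd : ∀ x ∈ Set.Ioc 0 M, HasDerivAt g
      (ω' x / ω x - stdGaussianPDF (x / σ) / stdGaussianCDF (-(x / σ)) / σ) x := by
    intro x hx
    have hωx : 0 < ω x := hωpos x hx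
    have h1 := (hderiv x hx).log hωx.ne'
    have h2 := (hQd x).log (cdf_pos (-(x / σ))).ne'
    have h3 := h1.add h2
    rw [hgdef]
    refine h3.congr_deriv ?_
    ring
  -- bounds on ω'
  have hd_le0 : ∀ x ∈ Set.Ioo 0 M, ω' x ≤ ω' 0 := by
    intro x hx
    have hmem0 : (0:ℝ) ∈ Set.Icc (0:ℝ) M := ⟨le_refl 0, hM.le⟩
    have hmemx : x ∈ Set.Icc (0:ℝ) M := ⟨hx.1.le, hx.2.le⟩
    have s1 := concave_deriv_le_slope hconc hmem0 hmemx hx.1 (hderiv x ⟨hx.1, hx.2.le⟩)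
    have s2 := concave_slope_le_deriv hconc hmem0 hmemx hx.1 hderiv0
    linarith
  have hd_nonneg : ∀ x ∈ Set.Ioo 0 M, 0 ≤ ω' x := by
    intro x hx
    have hmemx : x ∈ Set.Icc (0:ℝ) M := ⟨hx.1.le, hx.2.le⟩
    have hmemM : M ∈ Set.Icc (0:ℝ) M := ⟨hM.le, le_refl M⟩
    have s1 := concave_slope_le_deriv hconc hmemx hmemM hx.2
      ((hderiv x ⟨hx.1, hx.2.le⟩).hasDerivWithinAt.mono (fun y hy => hy))
    have hslope : 0 ≤ (ω M - ω x) / (M - x) :=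
      div_nonneg (by linarith [hmono hmemx hmemM hx.2.le]) (by linarith [hx.2])
    linarith
  have hd_anti : ∀ x ∈ Set.Ioo 0 M, ∀ y ∈ Set.Ioo 0 M, x < y → ω' y ≤ ω' x := by
    intro x hx y hy hxy
    have hmemx : x ∈ Set.Icc (0:ℝ) M := ⟨hx.1.le, hx.2.le⟩
    have hmemy : y ∈ Set.Icc (0:ℝ) M := ⟨hy.1.le, hy.2.le⟩
    have s1 := concave_deriv_le_slope hconc hmemx hmemy hxy (hderiv y ⟨hy.1, hy.2.le⟩)
    have s2 := concave_slope_le_deriv hconc hmemx hmemy hxy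
      (hderiv x ⟨hx.1, hx.2.le⟩).hasDerivWithinAt
    linarith
  -- strict antitonicity of deriv g on the open interval
  have hganti : ∀ x ∈ Set.Ioo 0 M, ∀ y ∈ Set.Ioo 0 M, x < y →
      deriv g y < deriv g x := by
    intro x hx y hy hxy
    rw [(hgd x ⟨hx.1, hx.2.le⟩).deriv, (hgd y ⟨hy.1, hy.2.le⟩).deriv]
    have hωx : 0 < ω x := hωpos x ⟨hx.1, hx.2.le⟩
    have hωxy : ω x ≤ ω y := hmono ⟨hx.1.le, hx.2.le⟩ ⟨hy.1.le, hy.2.le⟩ hxy.le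
    have h1 : ω' y / ω y ≤ ω' x / ω x :=
      div_le_div₀ (le_trans (hd_nonneg x hx) (le_refl _)) (hd_anti x hx y hy hxy) hωx hωxy
    have h2 : stdGaussianPDF (x / σ) / stdGaussianCDF (-(x / σ))
        < stdGaussianPDF (y / σ) / stdGaussianCDF (-(y / σ)) := by
      have := hazard_strictMono (show x / σ < y / σ from by gcongr)
      simpa using this
    have h3 : stdGaussianPDF (x / σ) / stdGaussianCDF (-(x / σ)) / σ
        < stdGaussianPDF (y / σ) / stdGaussianCDF (-(y / σ)) / σ := by gcongr
    linarith
  -- exp of g is f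
  have hexp : ∀ x : ℝ, 0 < ω x → Real.exp (g x) = f x := by
    intro x hx
    rw [hgdef, hfdef]
    simp only []
    rw [Real.exp_add, Real.exp_log hx, Real.exp_log (cdf_pos (-(x / σ)))]
  -- no two distinct maximizers
  have hkey : ∀ a b : ℝ, a ∈ Set.Icc 0 M → b ∈ Set.Icc 0 M → a < b →
      (∀ x ∈ Set.Icc 0 M, f x ≤ f a) → (∀ x ∈ Set.Icc 0 M, f x ≤ f b) → False := by
    intro a b ha hb hab hmaxa hmaxb
    have hfa : 0 < f a := lt_of_lt_of_le hfM (hmaxa M ⟨hM.le, le_refl M⟩)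
    have hωa : 0 < ω a := by
      by_contra hc
      push_neg at hc
      have : f a ≤ 0 := by
        rw [hfdef]
        exact mul_nonpos_of_nonpos_of_nonneg hc (cdf_pos _).le
      linarith
    have hωposI : ∀ x ∈ Set.Icc a M, 0 < ω x := by
      intro x hx
      rcases eq_or_lt_of_le (le_trans ha.1 hx.1) with h | h
      · have ha0 : a = 0 := le_antisymm (le_trans hx.1 h.symm.le) ha.1
        rw [← h]
        rw [ha0] at hωa
        exact hωa
      · exact hωpos x ⟨h, hx.2⟩
    have hIccsub : Set.Icc a M ⊆ Set.Icc 0 M := Set.Icc_subset_Icc ha.1 (le_refl M)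
    have hgcont : ContinuousOn g (Set.Icc a M) := by
      rw [hgdef]
      exact ((hωcont.mono hIccsub).log (fun x hx => (hωposI x hx).ne')).add
        ((hQcont.continuousOn).log (fun x hx => (cdf_pos _).ne'))
    have hscc : StrictConcaveOn ℝ (Set.Icc a M) g := by
      refine StrictAntiOn.strictConcaveOn_of_deriv (convex_Icc a M) hgcont ?_
      rw [interior_Icc]
      intro x hx y hy hxy
      exact hganti x ⟨lt_of_le_of_lt ha.1 hx.1, hx.2⟩ y ⟨lt_of_le_of_lt ha.1 hy.1, hy.2⟩ hxy
    have hbM : b ∈ Set.Icc a M := ⟨hab.le, hb.2⟩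
    have haM : a ∈ Set.Icc a M := ⟨le_refl a, le_trans ha.2 (le_refl M)⟩
    have hmid := hscc.2 haM hbM hab.ne (by norm_num : (0:ℝ) < 1/2)
      (by norm_num : (0:ℝ) < 1/2) (by norm_num)
    have hfab : f a = f b := le_antisymm (hmaxb a ha) (hmaxa b hb)
    have hgab : g a = g b := by
      have := congrArg Real.log (hfab)
      rwa [← hexp a hωa, ← hexp b (hωposI b hbM), Real.log_exp, Real.log_exp] at this
    have hmmem : (1/2 : ℝ) • a + (1/2 : ℝ) • b ∈ Set.Icc a M := by
      simp only [smul_eq_mul]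
      exact ⟨by linarith, by nlinarith [hb.2, ha.1]⟩
    have hgm : g a < g ((1/2 : ℝ) • a + (1/2 : ℝ) • b) := by
      have h12 : (1/2 : ℝ) • g a + (1/2 : ℝ) • g b = g a := by
        simp only [smul_eq_mul]; rw [hgab]; ring
      linarith [hmid]
    have hfm : f a < f ((1/2 : ℝ) • a + (1/2 : ℝ) • b) := by
      rw [← hexp a hωa, ← hexp _ (hωposI _ hmmem)]
      exact Real.exp_lt_exp.2 hgm
    have := hmaxa _ (hIccsub hmmem)
    linarith
  -- assemble the answer
  refine ⟨εs, hεsmem, fun ε hε => hεsmax' ε hε, ?_, ?_⟩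
  · intro ε hε hmaxε
    by_contra hne
    rcases lt_or_gt_of_ne hne with h | h
    · exact hkey ε εs hε hεsmem h (fun x hx => hmaxε x hx) hεsmax'
    · exact hkey εs ε hεsmem hε h hεsmax' (fun x hx => hmaxε x hx)
  · rcases eq_or_lt_of_le hω0 with hω00 | hω00
    · refine iff_of_true ?_ ?_
      · intro h0
        have h1 := hV
        rw [h0] at h1
        have h2 : f 0 = 0 := by
          rw [hfdef]
          simp [← hω00]
        linarith
      · rw [← hω00]
        simpa using hσ
    · constructor
      · intro hne
        by_contra hc
        push_neg at hc
        have hcond : σ * ω' 0 ≤ 2 * stdGaussianPDF 0 * ω 0 := by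
          have he : 2 * stdGaussianPDF 0 * (ω 0 / ω' 0)
              = 2 * stdGaussianPDF 0 * ω 0 / ω' 0 := by ring
          rw [he] at hc
          have := (le_div_iff₀ hpos0).1 hc
          linarith
        have hdivle : ω' 0 / ω 0 ≤ 2 * stdGaussianPDF 0 / σ := by
          rw [div_le_div_iff₀ hω00 hσ]
          nlinarith
        have hωAll : ∀ x ∈ Set.Icc 0 M, 0 < ω x := by
          intro x hx
          rcases eq_or_lt_of_le hx.1 with h | h
          · rw [← h]; exact hω00
          · exact hωpos x ⟨h, hx.2⟩
        have hgcont : ContinuousOn g (Set.Icc 0 M) := by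
          rw [hgdef]
          exact ((hωcont).log (fun x hx => (hωAll x hx).ne')).add
            ((hQcont.continuousOn).log (fun x hx => (cdf_pos _).ne'))
        have hganti2 : StrictAntiOn g (Set.Icc 0 M) := by
          refine strictAntiOn_of_deriv_neg (convex_Icc 0 M) hgcont ?_
          rw [interior_Icc]
          intro x hx
          rw [(hgd x ⟨hx.1, hx.2.le⟩).deriv]
          have hωx := hωpos x ⟨hx.1, hx.2.le⟩
          have h1 : ω' x / ω x ≤ ω' 0 / ω 0 :=
            div_le_div₀ hpos0.le (hd_le0 x hx) hω00
              (hmono ⟨le_refl 0, hM.le⟩ ⟨hx.1.le, hx.2.le⟩ hx.1.le)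
          have h2 : 2 * stdGaussianPDF 0
              < stdGaussianPDF (x / σ) / stdGaussianCDF (-(x / σ)) := by
            have h5 := hazard_strictMono (show (0:ℝ) < x / σ from div_pos hx.1 hσ)
            simp only at h5
            rw [neg_zero, cdf_zero] at h5
            have e : stdGaussianPDF 0 / (1/2) = 2 * stdGaussianPDF 0 := by ring
            linarith [e ▸ h5]
          have h3 : 2 * stdGaussianPDF 0 / σ
              < stdGaussianPDF (x / σ) / stdGaussianCDF (-(x / σ)) / σ := by gcongr
          have h4 : ω' x / ω x ≤ 2 * stdGaussianPDF 0 / σ := le_trans h1 hdivle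
          linarith
        have hεs_pos : 0 < εs := lt_of_le_of_ne hεsmem.1 (Ne.symm hne)
        have hglt : g εs < g 0 := hganti2 ⟨le_refl 0, hM.le⟩ hεsmem hεs_pos
        have hflt : f εs < f 0 := by
          rw [← hexp εs (hωpos εs ⟨hεs_pos, hεsmem.2⟩), ← hexp 0 hω00]
          exact Real.exp_lt_exp.2 hglt
        have := hεsmax' 0 ⟨le_refl 0, hM.le⟩
        linarith
      · intro hrhs h0
        have e0 : stdGaussianCDF (-(0 / σ)) = 1/2 := by
          rw [zero_div, neg_zero, cdf_zero]
        have hD : 0 < ω' 0 * stdGaussianCDF (-(0 / σ))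
            + ω 0 * -(stdGaussianPDF (0 / σ) / σ) := by
          rw [e0, zero_div]
          have h1 : 2 * stdGaussianPDF 0 * ω 0 < σ * ω' 0 := by
            have h2 : 2 * stdGaussianPDF 0 * (ω 0 / ω' 0)
                = 2 * stdGaussianPDF 0 * ω 0 / ω' 0 := by ring
            rw [h2, div_lt_iff₀ hpos0] at hrhs
            linarith
          have h3 : ω 0 * stdGaussianPDF 0 / σ < ω' 0 * (1/2) := by
            rw [div_lt_iff₀ hσ]
            nlinarith
          have h4 : ω 0 * -(stdGaussianPDF 0 / σ) = -(ω 0 * stdGaussianPDF 0 / σ) := by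
            ring
          rw [h4]
          linarith
        have hfd : HasDerivWithinAt f
            (ω' 0 * stdGaussianCDF (-(0 / σ)) + ω 0 * -(stdGaussianPDF (0 / σ) / σ))
            (Set.Ici 0) 0 :=
          hderiv0.mul ((hQd 0).hasDerivWithinAt)
        obtain ⟨t, htm, hlt⟩ := exists_gt_of_right_deriv_pos hM hfd hD
        have hle := hεsmax' t ⟨htm.1.le, htm.2⟩
        rw [h0] at hle
        linarith
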